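/- Let N ≥ 2 and for each y ∈ {1,…,κ} let â_y^N solve the backward ODE (â_y^N)' + 2b₁_y â_y^N − (2(N+1)/N) b₂_y² (â_y^N)² + ∑_i q_{y,i} â_i^N + h_y = 0 with â_y^N(T) = g_y, and let a_y solve a_y' + 2b₁_y a_y − 2 b₂_y² a_y² + ∑_i q_{y,i} a_i + h_y = 0 with a_y(T) = g_y. Assume both solutions exist on [0,T] and are uniformly bounded in N together with the coefficients by some K₁. Then sup_{t∈[0,T]} max_y |â_y^N(t) − a_y(t)| ≤ K/N for a constant K independent of N. -/

import Mathlib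

open Set

/-- the solution âᴺ of the N-player Riccati equation converges to the
MFG Riccati solution a at rate 1/N, uniformly on [0,T], with K independent of N. -/
theorem stmt15 (κ : ℕ) (hκ : 1 ≤ κ) (T K₁ : ℝ) (hT : 0 < T) (hK₁ : 0 < K₁)
    (b₁ b₂ : Fin κ → ℝ → ℝ) (hb₁ : ∀ y, Continuous (b₁ y)) (hb₂ : ∀ y, Continuous (b₂ y))
    (hb₁bd : ∀ y, ∀ t ∈ Icc (0 : ℝ) T, |b₁ y t| ≤ K₁)
    (hb₂bd : ∀ y, ∀ t ∈ Icc (0 : ℝ) T, |b₂ y t| ≤ K₁)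
    (q : Fin κ → Fin κ → ℝ) (hq : ∀ y i, |q y i| ≤ K₁)
    (h g : Fin κ → ℝ)
    (a : Fin κ → ℝ → ℝ) (haC : ∀ y, ContinuousOn (a y) (Icc 0 T))
    (ha : ∀ y, ∀ t ∈ Icc (0 : ℝ) T,
      HasDerivAt (a y)
        (-(2 * b₁ y t * a y t - 2 * (b₂ y t) ^ 2 * (a y t) ^ 2
          + (∑ i, q y i * a i t) + h y)) t)
    (haT : ∀ y, a y T = g y)
    (habd : ∀ y, ∀ t ∈ Icc (0 : ℝ) T, |a y t| ≤ K₁) :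
    ∃ K : ℝ, ∀ N : ℕ, 2 ≤ N → ∀ ahat : Fin κ → ℝ → ℝ,
      (∀ y, ContinuousOn (ahat y) (Icc 0 T)) →
      (∀ y, ∀ t ∈ Icc (0 : ℝ) T,
        HasDerivAt (ahat y)
          (-(2 * b₁ y t * ahat y t
            - (2 * ((N : ℝ) + 1) / N) * (b₂ y t) ^ 2 * (ahat y t) ^ 2
            + (∑ i, q y i * ahat i t) + h y)) t) →
      (∀ y, ahat y T = g y) →
      (∀ y, ∀ t ∈ Icc (0 : ℝ) T, |ahat y t| ≤ K₁) →
      ∀ t ∈ Icc (0 : ℝ) T, ∀ y, |ahat y t - a y t| ≤ K / N := by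
  
  have habs_mul : ∀ {x y p r : ℝ}, |x| ≤ p → |y| ≤ r → |x * y| ≤ p * r := by
    intro x y p r hx hy
    rw [abs_mul]
    exact mul_le_mul hx hy (abs_nonneg _) ((abs_nonneg x).trans hx)
  set C : ℝ := 2 * K₁ + 4 * K₁ ^ 3 + κ * K₁ with hC_def
  have hC : 0 < C := by positivity
  refine ⟨2 * K₁ ^ 4 / C * (Real.exp (C * T) - 1), ?_⟩
  intro N hN ahat ahatC hahat hahatT hahatbd t ht y
  have hN0 : (0 : ℝ) < N := by
    have : (2 : ℝ) ≤ N := by exact_mod_cast hN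
    linarith
  set ε : ℝ := 2 * K₁ ^ 4 / N with hε_def
  set f : ℝ → (Fin κ → ℝ) := fun s z => ahat z (T - s) - a z (T - s) with hf_def
  set f' : ℝ → (Fin κ → ℝ) := fun s z =>
    (2 * b₁ z (T - s) * ahat z (T - s)
      - (2 * ((N : ℝ) + 1) / N) * (b₂ z (T - s)) ^ 2 * (ahat z (T - s)) ^ 2
      + (∑ i, q z i * ahat i (T - s)) + h z)
    - (2 * b₁ z (T - s) * a z (T - s) - 2 * (b₂ z (T - s)) ^ 2 * (a z (T - s)) ^ 2
      + (∑ i, q z i * a i (T - s)) + h z) with hf'_def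
  have hmem : ∀ s ∈ Icc (0 : ℝ) T, T - s ∈ Icc (0 : ℝ) T := by
    intro s hs
    exact ⟨by linarith [hs.2], by linarith [hs.1]⟩
  -- continuity of f
  have hfc : ContinuousOn f (Icc 0 T) := by
    rw [continuousOn_pi]
    intro z
    have hsub : ContinuousOn (fun s : ℝ => T - s) (Icc 0 T) :=
      (continuous_const.sub continuous_id).continuousOn
    exact ((ahatC z).comp hsub hmem).sub ((haC z).comp hsub hmem)
  -- derivative of f
  have hfd : ∀ s ∈ Ico (0 : ℝ) T, HasDerivAt f (f' s) s := by
    intro s hs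
    have hsmem : T - s ∈ Icc (0 : ℝ) T := hmem s ⟨hs.1, hs.2.le⟩
    rw [hasDerivAt_pi]
    intro z
    have h1 : HasDerivAt (fun s : ℝ => T - s) (-1) s := by
      simpa using (hasDerivAt_id s).const_sub T
    have h2 := (hahat z (T - s) hsmem).comp s h1
    have h3 := (ha z (T - s) hsmem).comp s h1
    have h4 := h2.sub h3
    convert h4 using 1
    · rfl
    simp only [hf'_def]
    ring
  -- the bound on the derivative
  have hbound : ∀ s ∈ Ico (0 : ℝ) T, ‖f' s‖ ≤ C * ‖f s‖ + ε := by
    intro s hs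
    have hM : (0 : ℝ) ≤ ‖f s‖ := norm_nonneg _
    have hεpos : 0 < ε := by positivity
    rw [pi_norm_le_iff_of_nonneg (by positivity)]
    intro z
    set t' := T - s with ht'_def
    have ht'mem : t' ∈ Icc (0 : ℝ) T := hmem s ⟨hs.1, hs.2.le⟩
    have hu : ∀ i, |ahat i t' - a i t'| ≤ ‖f s‖ := by
      intro i
      have := norm_le_pi_norm (f s) i
      simpa [hf_def, Real.norm_eq_abs] using this
    have hkey : f' s z =
        2 * b₁ z t' * (ahat z t' - a z t')
        + (-(2 * (b₂ z t') ^ 2 * (ahat z t' + a z t') * (ahat z t' - a z t')))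
        + (-(2 / N * (b₂ z t') ^ 2 * (ahat z t') ^ 2))
        + ∑ i, q z i * (ahat i t' - a i t') := by
      simp only [hf'_def, ← ht'_def, Finset.mul_sum, Finset.sum_sub_distrib, mul_sub]
      field_simp
      ring
    rw [Real.norm_eq_abs, hkey]
    have e1 : |2 * b₁ z t' * (ahat z t' - a z t')| ≤ 2 * K₁ * ‖f s‖ := by
      have : |2 * b₁ z t'| ≤ 2 * K₁ := by
        rw [abs_mul, abs_two]
        exact mul_le_mul_of_nonneg_left (hb₁bd z t' ht'mem) (by norm_num)
      exact habs_mul this (hu z)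
    have hb2sq : |(b₂ z t') ^ 2| ≤ K₁ ^ 2 := by
      rw [abs_pow]
      exact pow_le_pow_left₀ (abs_nonneg _) (hb₂bd z t' ht'mem) 2
    have e2 : |(-(2 * (b₂ z t') ^ 2 * (ahat z t' + a z t') * (ahat z t' - a z t')))|
        ≤ 4 * K₁ ^ 3 * ‖f s‖ := by
      rw [abs_neg]
      have hsum : |ahat z t' + a z t'| ≤ 2 * K₁ := by
        calc |ahat z t' + a z t'| ≤ |ahat z t'| + |a z t'| := abs_add_le _ _
          _ ≤ K₁ + K₁ := add_le_add (hahatbd z t' ht'mem) (habd z t' ht'mem)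
          _ = 2 * K₁ := by ring
      have : |2 * (b₂ z t') ^ 2 * (ahat z t' + a z t')| ≤ 4 * K₁ ^ 3 := by
        have h5 : |2 * (b₂ z t') ^ 2| ≤ 2 * K₁ ^ 2 := by
          rw [abs_mul, abs_two]
          exact mul_le_mul_of_nonneg_left hb2sq (by norm_num)
        calc |2 * (b₂ z t') ^ 2 * (ahat z t' + a z t')| ≤ (2 * K₁ ^ 2) * (2 * K₁) :=
              habs_mul h5 hsum
          _ = 4 * K₁ ^ 3 := by ring
      exact habs_mul this (hu z)
    have e3 : |(-(2 / N * (b₂ z t') ^ 2 * (ahat z t') ^ 2))| ≤ ε := by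
      rw [abs_neg]
      have hah : |(ahat z t') ^ 2| ≤ K₁ ^ 2 := by
        rw [abs_pow]
        exact pow_le_pow_left₀ (abs_nonneg _) (hahatbd z t' ht'mem) 2
      have h6 : |2 / N * (b₂ z t') ^ 2| ≤ 2 / N * K₁ ^ 2 := by
        rw [abs_mul]
        have : |(2 : ℝ) / N| = 2 / N := abs_of_pos (by positivity)
        rw [this]
        exact mul_le_mul_of_nonneg_left hb2sq (by positivity)
      calc |2 / N * (b₂ z t') ^ 2 * (ahat z t') ^ 2| ≤ 2 / N * K₁ ^ 2 * K₁ ^ 2 :=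
            habs_mul h6 hah
        _ = ε := by rw [hε_def]; ring
    have e4 : |∑ i, q z i * (ahat i t' - a i t')| ≤ κ * K₁ * ‖f s‖ := by
      calc |∑ i, q z i * (ahat i t' - a i t')| ≤ ∑ i, |q z i * (ahat i t' - a i t')| :=
            Finset.abs_sum_le_sum_abs _ _
        _ ≤ ∑ _i : Fin κ, K₁ * ‖f s‖ :=
            Finset.sum_le_sum fun i _ => habs_mul (hq z i) (hu i)
        _ = κ * K₁ * ‖f s‖ := by
            rw [Finset.sum_const, Finset.card_univ, Fintype.card_fin, nsmul_eq_mul]; ring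
    calc |2 * b₁ z t' * (ahat z t' - a z t')
        + (-(2 * (b₂ z t') ^ 2 * (ahat z t' + a z t') * (ahat z t' - a z t')))
        + (-(2 / N * (b₂ z t') ^ 2 * (ahat z t') ^ 2))
        + ∑ i, q z i * (ahat i t' - a i t')|
        ≤ |2 * b₁ z t' * (ahat z t' - a z t')
        + (-(2 * (b₂ z t') ^ 2 * (ahat z t' + a z t') * (ahat z t' - a z t')))
        + (-(2 / N * (b₂ z t') ^ 2 * (ahat z t') ^ 2))|
        + |∑ i, q z i * (ahat i t' - a i t')| := abs_add_le _ _
      _ ≤ |2 * b₁ z t' * (ahat z t' - a z t')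
        + (-(2 * (b₂ z t') ^ 2 * (ahat z t' + a z t') * (ahat z t' - a z t')))|
        + |(-(2 / N * (b₂ z t') ^ 2 * (ahat z t') ^ 2))|
        + |∑ i, q z i * (ahat i t' - a i t')| := by
          gcongr
          exact abs_add_le _ _
      _ ≤ |2 * b₁ z t' * (ahat z t' - a z t')|
        + |(-(2 * (b₂ z t') ^ 2 * (ahat z t' + a z t') * (ahat z t' - a z t')))|
        + |(-(2 / N * (b₂ z t') ^ 2 * (ahat z t') ^ 2))|
        + |∑ i, q z i * (ahat i t' - a i t')| := by
          gcongr
          exact abs_add_le _ _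
      _ ≤ 2 * K₁ * ‖f s‖ + 4 * K₁ ^ 3 * ‖f s‖ + ε + κ * K₁ * ‖f s‖ := by
          gcongr
      _ = C * ‖f s‖ + ε := by rw [hC_def]; ring
  have hf0 : ‖f 0‖ ≤ 0 := by
    have : f 0 = 0 := by
      funext z
      simp [hf_def, hahatT, haT]
    rw [this, norm_zero]
  have hg := norm_le_gronwallBound_of_norm_deriv_right_le hfc
    (fun s hs => (hfd s hs).hasDerivWithinAt) hf0 hbound
  have hTt : T - t ∈ Icc (0 : ℝ) T := hmem t ht
  have h7 := hg (T - t) hTt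
  have h8 : |ahat y t - a y t| ≤ ‖f (T - t)‖ := by
    have := norm_le_pi_norm (f (T - t)) y
    simpa [hf_def, Real.norm_eq_abs, sub_sub_cancel] using this
  have h9 : gronwallBound 0 C ε (T - t - 0) = ε / C * (Real.exp (C * (T - t)) - 1) := by
    rw [gronwallBound_of_K_ne_0 hC.ne']
    simp
  have h10 : ε / C * (Real.exp (C * (T - t)) - 1)
      ≤ 2 * K₁ ^ 4 / C * (Real.exp (C * T) - 1) / N := by
    have hexp : Real.exp (C * (T - t)) ≤ Real.exp (C * T) := by
      apply Real.exp_le_exp.2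
      have := ht.1
      nlinarith
    have heq : ε / C * (Real.exp (C * (T - t)) - 1)
        = 2 * K₁ ^ 4 / C * (Real.exp (C * (T - t)) - 1) / N := by
      rw [hε_def]; ring
    rw [heq]
    gcongr
  calc |ahat y t - a y t| ≤ ‖f (T - t)‖ := h8
    _ ≤ gronwallBound 0 C ε (T - t - 0) := h7
    _ = ε / C * (Real.exp (C * (T - t)) - 1) := h9
    _ ≤ 2 * K₁ ^ 4 / C * (Real.exp (C * T) - 1) / N := h10
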